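/- Let m ≥ 2 be a natural number and a₁, …, a_m nonnegative reals. Then (a₁ + ⋯ + a_m)^m − m^m a₁⋯a_m = ∑_{1 ≤ i < j ≤ m} (a_i − a_j)² P_{ij}(a₁,…,a_m), where each P_{ij} is a homogeneous polynomial of degree m−2 with nonnegative coefficients. In particular, (a₁ + ⋯ + a_m)^m ≥ m^m a₁⋯a_m. -/

import Mathlib

open Finset MvPolynomial

noncomputable def es {m : ℕ} (a : Fin m → ℝ) (S : Finset (Fin m)) (k : ℕ) : ℝ :=
  ∑ T ∈ S.powersetCard k, ∏ i ∈ T, a i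

lemma es_zero {m : ℕ} (a : Fin m → ℝ) (S : Finset (Fin m)) : es a S 0 = 1 := by
  simp [es]

lemma es_empty {m : ℕ} (a : Fin m → ℝ) (k : ℕ) : es a ∅ (k+1) = 0 := by
  rw [es, powersetCard_eq_empty.2 (by simp), sum_empty]

lemma es_insert {m : ℕ} (a : Fin m → ℝ) {S : Finset (Fin m)} {j : Fin m} (h : j ∉ S) (k : ℕ) :
    es a (insert j S) (k+1) = es a S (k+1) + a j * es a S k := by
  have hdisj : Disjoint (powersetCard (k+1) S) ((powersetCard k S).image (insert j)) := by
    rw [disjoint_right]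
    intro T hT hT'
    simp only [mem_image] at hT
    obtain ⟨U, hU, rfl⟩ := hT
    rw [mem_powersetCard] at hT' hU
    exact h (hT'.1 (mem_insert_self _ _))
  have hinj : ∀ T ∈ powersetCard k S, ∀ U ∈ powersetCard k S, insert j T = insert j U → T = U := by
    intro T hT U hU hTU
    rw [mem_powersetCard] at hT hU
    have hjT : j ∉ T := fun hjm => h (hT.1 hjm)
    have hjU : j ∉ U := fun hjm => h (hU.1 hjm)
    rw [← erase_insert hjT, ← erase_insert hjU, hTU]
  rw [es, powersetCard_succ_insert h, sum_union hdisj, sum_image hinj]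
  rw [es, es, mul_sum]
  congr 1
  refine sum_congr rfl (fun T hT => ?_)
  rw [mem_powersetCard] at hT
  rw [prod_insert (fun hjm => h (hT.1 hjm))]

lemma es_one {m : ℕ} (a : Fin m → ℝ) (S : Finset (Fin m)) : es a S 1 = ∑ i ∈ S, a i := by
  rw [es, powersetCard_one, sum_map]
  simp

lemma es_I1 {m : ℕ} (a : Fin m → ℝ) (S : Finset (Fin m)) (k : ℕ) :
    ∑ i ∈ S, a i * es a (S.erase i) k = (k+1 : ℝ) * es a S (k+1) := by
  induction S using Finset.induction_on generalizing k with
  | empty => simp [es_empty]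
  | @insert j S hj ih =>
    rw [sum_insert hj, erase_insert hj]
    have herase : ∀ i ∈ S, (insert j S).erase i = insert j (S.erase i) := by
      intro i hi
      rw [erase_insert_of_ne (by rintro rfl; exact hj hi)]
    rw [sum_congr rfl (fun i hi => by rw [herase i hi])]
    cases k with
    | zero =>
      rw [es_insert a hj 0]
      simp only [es_zero, es_one, mul_one, sum_insert hj]
      push_cast
      rw [es_one]
      ring
    | succ k =>
      have expand : ∀ i ∈ S, a i * es a (insert j (S.erase i)) (k+1)
          = a i * es a (S.erase i) (k+1) + a j * (a i * es a (S.erase i) k) := by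
        intro i hi
        rw [es_insert a (fun hjS => hj (mem_of_mem_erase hjS)) k]
        ring
      rw [sum_congr rfl expand, sum_add_distrib, ← mul_sum, ih (k+1), ih k,
        es_insert a hj (k+1)]
      push_cast
      ring

lemma es_I2 {m : ℕ} (a : Fin m → ℝ) (S : Finset (Fin m)) (k : ℕ) :
    ∑ i ∈ S, es a (S.erase i) k = ((S.card : ℝ) - k) * es a S k := by
  cases k with
  | zero => simp [es_zero]
  | succ k =>
    have h : ∀ i ∈ S, es a S (k+1) = es a (S.erase i) (k+1) + a i * es a (S.erase i) k := by
      intro i hi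
      conv_lhs => rw [← insert_erase hi]
      rw [es_insert a (notMem_erase i S) k]
    have h2 : (S.card : ℝ) * es a S (k+1)
        = ∑ i ∈ S, es a (S.erase i) (k+1) + ∑ i ∈ S, a i * es a (S.erase i) k := by
      rw [← sum_add_distrib, ← sum_congr rfl h, sum_const, nsmul_eq_mul]
    rw [es_I1] at h2
    push_cast at h2 ⊢
    linarith

lemma cheb {m : ℕ} (x y : Fin m → ℝ) :
    ∑ p ∈ Finset.univ.filter (fun p : Fin m × Fin m => p.1 < p.2),
        (x p.1 - x p.2) * (y p.1 - y p.2)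
      = (m : ℝ) * (∑ i, x i * y i) - (∑ i, x i) * (∑ i, y i) := by
  classical
  set f : Fin m × Fin m → ℝ := fun p => (x p.1 - x p.2) * (y p.1 - y p.2) with hf
  have hT : ∑ p : Fin m × Fin m, f p
      = 2 * ((m : ℝ) * (∑ i, x i * y i) - (∑ i, x i) * (∑ i, y i)) := by
    rw [Fintype.sum_prod_type]
    have hrow : ∀ i, ∑ j, f (i, j)
        = (m : ℝ) * (x i * y i) - x i * (∑ j, y j) - (∑ j, x j) * y i + ∑ j, x j * y j := by
      intro i
      have : ∀ j, f (i, j) = x i * y i - x i * y j - x j * y i + x j * y j := by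
        intro j; simp only [hf]; ring
      rw [sum_congr rfl (fun j _ => this j)]
      simp only [sum_add_distrib, sum_sub_distrib, ← mul_sum, ← sum_mul, sum_const,
        card_univ, Fintype.card_fin, nsmul_eq_mul]
      ring
    rw [sum_congr rfl (fun i _ => hrow i)]
    simp only [sum_add_distrib, sum_sub_distrib, ← mul_sum, ← sum_mul, sum_const,
      card_univ, Fintype.card_fin, nsmul_eq_mul]
    ring
  have hsplit := Finset.sum_filter_add_sum_filter_not Finset.univ
    (fun p : Fin m × Fin m => p.1 < p.2) f
  have hgt : ∑ p ∈ Finset.univ.filter (fun p : Fin m × Fin m => ¬ p.1 < p.2), f p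
      = ∑ p ∈ Finset.univ.filter (fun p : Fin m × Fin m => p.2 < p.1), f p := by
    refine (sum_subset ?_ ?_).symm
    · intro p hp
      simp only [mem_filter, mem_univ, true_and] at hp ⊢
      exact not_lt_of_gt hp
    · intro p hp hnp
      simp only [mem_filter, mem_univ, true_and, not_lt] at hp hnp
      have : p.1 = p.2 := le_antisymm hnp hp
      simp only [hf, this, sub_self, zero_mul]
  have hswap : ∑ p ∈ Finset.univ.filter (fun p : Fin m × Fin m => p.2 < p.1), f p
      = ∑ p ∈ Finset.univ.filter (fun p : Fin m × Fin m => p.1 < p.2), f p := by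
    refine Finset.sum_equiv (Equiv.prodComm (Fin m) (Fin m)) ?_ ?_
    · intro p; simp
    · intro p hp; simp only [hf, Equiv.prodComm_apply, Prod.fst_swap, Prod.snd_swap]; ring
  have huniv : ∑ p ∈ Finset.univ.filter (fun p : Fin m × Fin m => p.1 < p.2), f p
        + ∑ p ∈ Finset.univ.filter (fun p : Fin m × Fin m => ¬ p.1 < p.2), f p
      = ∑ p : Fin m × Fin m, f p := hsplit
  rw [hgt, hswap] at huniv
  rw [hT] at huniv
  linarith

lemma star {m : ℕ} (a : Fin m → ℝ) (k : ℕ) (hk : 1 ≤ k) :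
    (∑ i, a i) * ((m:ℝ) - k) * es a Finset.univ k - (m:ℝ) * ((k:ℝ)+1) * es a Finset.univ (k+1)
      = ∑ p ∈ Finset.univ.filter (fun p : Fin m × Fin m => p.1 < p.2),
          (a p.1 - a p.2)^2 * es a ((Finset.univ.erase p.1).erase p.2) (k-1) := by
  classical
  obtain ⟨k, rfl⟩ : ∃ k', k = k'+1 := ⟨k-1, (Nat.succ_pred_eq_of_pos hk).symm⟩
  set y : Fin m → ℝ := fun i => es a (Finset.univ.erase i) (k+1) with hy
  have hdiff : ∀ p : Fin m × Fin m, p.1 ≠ p.2 →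
      y p.1 - y p.2 = (a p.2 - a p.1) * es a ((Finset.univ.erase p.1).erase p.2) k := by
    intro p hne
    have h1 : Finset.univ.erase p.1 = insert p.2 ((Finset.univ.erase p.1).erase p.2) :=
      (insert_erase (mem_erase.2 ⟨hne.symm, mem_univ _⟩)).symm
    have h2 : Finset.univ.erase p.2 = insert p.1 ((Finset.univ.erase p.2).erase p.1) :=
      (insert_erase (mem_erase.2 ⟨hne, mem_univ _⟩)).symm
    have e1 : y p.1 = es a ((Finset.univ.erase p.1).erase p.2) (k+1)
        + a p.2 * es a ((Finset.univ.erase p.1).erase p.2) k := by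
      show es a (Finset.univ.erase p.1) (k+1) = _
      conv_lhs => rw [h1]
      exact es_insert a (notMem_erase _ _) k
    have e2 : y p.2 = es a ((Finset.univ.erase p.1).erase p.2) (k+1)
        + a p.1 * es a ((Finset.univ.erase p.1).erase p.2) k := by
      show es a (Finset.univ.erase p.2) (k+1) = _
      conv_lhs => rw [h2]
      rw [es_insert a (notMem_erase _ _) k, erase_right_comm]
    rw [e1, e2]
    ring
  have hI1 : ∑ i, a i * y i = ((k:ℝ)+2) * es a Finset.univ (k+2) := by
    have := es_I1 a Finset.univ (k+1)
    simp only [hy]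
    rw [this]
    push_cast; ring_nf
  have hI2 : ∑ i, y i = ((m:ℝ) - ((k:ℝ)+1)) * es a Finset.univ (k+1) := by
    have := es_I2 a Finset.univ (k+1)
    simp only [hy]
    rw [this, card_univ, Fintype.card_fin]
    push_cast; ring_nf
  have hcheb := cheb a y
  have hsum : ∑ p ∈ Finset.univ.filter (fun p : Fin m × Fin m => p.1 < p.2),
        (a p.1 - a p.2) * (y p.1 - y p.2)
      = - ∑ p ∈ Finset.univ.filter (fun p : Fin m × Fin m => p.1 < p.2),
          (a p.1 - a p.2)^2 * es a ((Finset.univ.erase p.1).erase p.2) k := by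
    rw [← sum_neg_distrib]
    refine sum_congr rfl (fun p hp => ?_)
    have hlt : p.1 < p.2 := (mem_filter.1 hp).2
    rw [hdiff p (ne_of_lt hlt)]
    ring
  rw [hsum, hI1, hI2] at hcheb
  have hrw : (k+1+1 : ℕ) = k+2 := rfl
  rw [Nat.add_sub_cancel]
  push_cast
  linarith

lemma claim {m : ℕ} (k : ℕ) (hk1 : 1 ≤ k) (hk : k ≤ m) :
    ∃ β : ℕ → ℝ, (∀ l, 0 ≤ β l) ∧ ∀ a : Fin m → ℝ,
      (m.choose k : ℝ) * (∑ i, a i)^k - (m:ℝ)^k * es a Finset.univ k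
        = ∑ l ∈ Finset.Ico 1 k, β l * (∑ i, a i)^(k-1-l) *
            (∑ p ∈ Finset.univ.filter (fun p : Fin m × Fin m => p.1 < p.2),
               (a p.1 - a p.2)^2 * es a ((Finset.univ.erase p.1).erase p.2) (l-1)) := by
  induction k, hk1 using Nat.le_induction with
  | base =>
    refine ⟨0, fun l => le_refl 0, fun a => ?_⟩
    simp [es_one, Nat.choose_one_right]
  | succ k hk1 ih =>
    obtain ⟨β, hβ, hid⟩ := ih (le_trans (Nat.le_succ k) hk)
    have hkm : (k:ℝ) ≤ (m:ℝ) := by exact_mod_cast le_trans (Nat.le_succ k) hk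
    refine ⟨fun l => if l = k then (m:ℝ)^k / ((k:ℝ)+1) else β l * ((m:ℝ) - k) / ((k:ℝ)+1),
      ?_, fun a => ?_⟩
    · intro l
      dsimp only
      by_cases hl : l = k
      · rw [if_pos hl]
        positivity
      · rw [if_neg hl]
        apply div_nonneg (mul_nonneg (hβ l) (by linarith)) (by positivity)
    · set s : ℝ := ∑ i, a i with hs
      set D : ℕ → ℝ := fun l => ∑ p ∈ Finset.univ.filter (fun p : Fin m × Fin m => p.1 < p.2),
          (a p.1 - a p.2)^2 * es a ((Finset.univ.erase p.1).erase p.2) (l-1) with hD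
      have hstar := star a k hk1
      have hchoose : (m.choose (k+1) : ℝ) * ((k:ℝ)+1) = (m.choose k : ℝ) * ((m:ℝ) - k) := by
        have := Nat.choose_succ_right_eq m k
        have hcast : ((m.choose (k+1) * (k+1) : ℕ) : ℝ) = ((m.choose k * (m - k) : ℕ) : ℝ) := by
          exact_mod_cast congrArg (Nat.cast : ℕ → ℝ) this
        push_cast [Nat.cast_sub (le_trans (Nat.le_succ k) hk)] at hcast
        linarith [hcast]
      rw [Finset.sum_Ico_succ_top hk1]
      have hsum_eq : ∑ l ∈ Finset.Ico 1 k,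
            (if l = k then (m:ℝ)^k / ((k:ℝ)+1) else β l * ((m:ℝ) - k) / ((k:ℝ)+1))
              * s^(k+1-1-l) * D l
          = (((m:ℝ) - k) / ((k:ℝ)+1)) * s
              * ∑ l ∈ Finset.Ico 1 k, β l * s^(k-1-l) * D l := by
        rw [mul_sum]
        refine sum_congr rfl (fun l hl => ?_)
        obtain ⟨hl1, hl2⟩ := Finset.mem_Ico.1 hl
        rw [if_neg (Nat.ne_of_lt hl2)]
        have hexp : k+1-1-l = (k-1-l)+1 := by omega
        rw [hexp, pow_succ]
        ring
      rw [hsum_eq]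
      dsimp only
      rw [if_pos rfl]
      have hexp2 : k+1-1-k = 0 := by omega
      rw [hexp2, pow_zero]
      have hid' := hid a
      rw [← hs] at hid' hstar
      have hne : ((k:ℝ)+1) ≠ 0 := by positivity
      field_simp
      linear_combination ((m:ℝ) - k) * s * hid' + (m:ℝ)^k * hstar + s^(k+1) * hchoose

lemma es_nonneg {m : ℕ} {a : Fin m → ℝ} (ha : ∀ i, 0 ≤ a i) (S : Finset (Fin m)) (k : ℕ) :
    0 ≤ es a S k :=
  Finset.sum_nonneg fun T _ => Finset.prod_nonneg fun i _ => ha i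

def NN {m : ℕ} (p : MvPolynomial (Fin m) ℝ) : Prop := ∀ d, 0 ≤ MvPolynomial.coeff d p

lemma NN_zero {m : ℕ} : NN (0 : MvPolynomial (Fin m) ℝ) := fun d => by simp

lemma NN_C {m : ℕ} {r : ℝ} (hr : 0 ≤ r) : NN (MvPolynomial.C r : MvPolynomial (Fin m) ℝ) := by
  intro d
  rw [MvPolynomial.coeff_C]
  split <;> simp [hr]

lemma NN_one {m : ℕ} : NN (1 : MvPolynomial (Fin m) ℝ) := by
  have := NN_C (m := m) (r := 1) zero_le_one
  simpa using this

lemma NN_X {m : ℕ} (i : Fin m) : NN (MvPolynomial.X i : MvPolynomial (Fin m) ℝ) := by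
  intro d
  rw [MvPolynomial.coeff_X']
  split <;> simp

lemma NN.mul {m : ℕ} {p q : MvPolynomial (Fin m) ℝ} (hp : NN p) (hq : NN q) : NN (p * q) := by
  intro d
  rw [MvPolynomial.coeff_mul]
  exact Finset.sum_nonneg fun x _ => mul_nonneg (hp x.1) (hq x.2)

lemma NN.sum {m : ℕ} {ι : Type*} {S : Finset ι} {f : ι → MvPolynomial (Fin m) ℝ}
    (h : ∀ i ∈ S, NN (f i)) : NN (∑ i ∈ S, f i) := by
  intro d
  rw [MvPolynomial.coeff_sum]
  exact Finset.sum_nonneg fun i hi => h i hi d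

lemma NN.prod {m : ℕ} {ι : Type*} {S : Finset ι} {f : ι → MvPolynomial (Fin m) ℝ}
    (h : ∀ i ∈ S, NN (f i)) : NN (∏ i ∈ S, f i) :=
  Finset.prod_induction f NN (fun _ _ ha hb => ha.mul hb) NN_one h

lemma NN.pow {m : ℕ} {p : MvPolynomial (Fin m) ℝ} (hp : NN p) (n : ℕ) : NN (p ^ n) := by
  induction n with
  | zero => simpa using NN_one
  | succ n ih => rw [pow_succ]; exact ih.mul hp

theorem stmt4 (m : ℕ) (hm : 2 ≤ m) :
    ∃ P : Fin m → Fin m → MvPolynomial (Fin m) ℝ,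
      (∀ i j : Fin m, (P i j).IsHomogeneous (m - 2) ∧
        ∀ d : Fin m →₀ ℕ, 0 ≤ MvPolynomial.coeff d (P i j)) ∧
      (∀ a : Fin m → ℝ, (∀ i, 0 ≤ a i) →
        (∑ i, a i) ^ m - (m : ℝ) ^ m * ∏ i, a i
          = ∑ p ∈ Finset.univ.filter (fun p : Fin m × Fin m => p.1 < p.2),
              (a p.1 - a p.2) ^ 2 * MvPolynomial.eval a (P p.1 p.2)) ∧
      (∀ a : Fin m → ℝ, (∀ i, 0 ≤ a i) → (m : ℝ) ^ m * ∏ i, a i ≤ (∑ i, a i) ^ m) := by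
  classical
  obtain ⟨β, hβ, hid⟩ := claim (m := m) m (le_trans one_le_two hm) (le_refl m)
  set P : Fin m → Fin m → MvPolynomial (Fin m) ℝ := fun i j =>
    if i < j then
      ∑ l ∈ Finset.Ico 1 m, MvPolynomial.C (β l) * (∑ t, MvPolynomial.X t) ^ (m-1-l) *
        (∑ T ∈ ((Finset.univ.erase i).erase j).powersetCard (l-1), ∏ t ∈ T, MvPolynomial.X t)
    else 0 with hPdef
  -- evaluation of P
  have heval : ∀ (a : Fin m → ℝ) (p : Fin m × Fin m), p.1 < p.2 →
      MvPolynomial.eval a (P p.1 p.2)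
        = ∑ l ∈ Finset.Ico 1 m, β l * (∑ i, a i)^(m-1-l)
            * es a ((Finset.univ.erase p.1).erase p.2) (l-1) := by
    intro a p hp
    rw [hPdef]
    dsimp only
    rw [if_pos hp]
    simp only [map_sum, map_mul, map_pow, MvPolynomial.eval_C, MvPolynomial.eval_X, map_prod, es]
  -- the main identity, for every a
  have hident : ∀ a : Fin m → ℝ,
      (∑ i, a i) ^ m - (m : ℝ) ^ m * ∏ i, a i
        = ∑ p ∈ Finset.univ.filter (fun p : Fin m × Fin m => p.1 < p.2),
            (a p.1 - a p.2) ^ 2 * MvPolynomial.eval a (P p.1 p.2) := by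
    intro a
    have hes : es a Finset.univ m = ∏ i, a i := by
      have hcard : (Finset.univ : Finset (Fin m)).card = m := by simp
      have hps : (Finset.univ : Finset (Fin m)).powersetCard m = {Finset.univ} := by
        have h2 := powersetCard_self (Finset.univ : Finset (Fin m))
        rwa [hcard] at h2
      rw [es, hps, sum_singleton]
    have h0 := hid a
    rw [Nat.choose_self, Nat.cast_one, one_mul, hes] at h0
    rw [h0]
    rw [Finset.sum_congr rfl (fun l (_ : l ∈ Finset.Ico 1 m) => mul_sum _ _ _)]
    rw [Finset.sum_comm]
    refine Finset.sum_congr rfl (fun p hp => ?_)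
    have hplt : p.1 < p.2 := (mem_filter.1 hp).2
    rw [heval a p hplt, mul_sum]
    refine Finset.sum_congr rfl (fun l _ => ?_)
    ring
  refine ⟨P, fun i j => ⟨?_, ?_⟩, fun a _ => hident a, fun a ha => ?_⟩
  · -- homogeneity
    rw [hPdef]
    dsimp only
    split
    case isTrue h =>
      apply MvPolynomial.IsHomogeneous.sum
      intro l hl
      obtain ⟨hl1, hl2⟩ := Finset.mem_Ico.1 hl
      have hdeg : 0 + (m-1-l) + (l-1) = m - 2 := by omega
      rw [← hdeg]
      apply MvPolynomial.IsHomogeneous.mul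
      apply MvPolynomial.IsHomogeneous.mul
      · exact MvPolynomial.isHomogeneous_C _ _
      · have hS : (∑ t, MvPolynomial.X t : MvPolynomial (Fin m) ℝ).IsHomogeneous 1 := by
          apply MvPolynomial.IsHomogeneous.sum
          intro t _
          exact MvPolynomial.isHomogeneous_X _ _
        have := hS.pow (m-1-l)
        rwa [one_mul] at this
      · apply MvPolynomial.IsHomogeneous.sum
        intro T hT
        have hcard : T.card = l - 1 := (Finset.mem_powersetCard.1 hT).2
        have hprod := MvPolynomial.IsHomogeneous.prod T
          (fun t => (MvPolynomial.X t : MvPolynomial (Fin m) ℝ)) (fun _ => 1)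
          (fun t _ => MvPolynomial.isHomogeneous_X _ _)
        simpa [hcard] using hprod
    case isFalse h => exact MvPolynomial.isHomogeneous_zero _ _ _
  · -- nonneg coefficients
    rw [hPdef]
    dsimp only
    split
    case isTrue h =>
      exact NN.sum (fun l _ => ((NN_C (hβ l)).mul ((NN.sum (fun t _ => NN_X t)).pow _)).mul
        (NN.sum (fun T _ => NN.prod (fun t _ => NN_X t))))
    case isFalse h => exact NN_zero
  · -- the inequality
    have h := hident a
    have hnn : 0 ≤ ∑ p ∈ Finset.univ.filter (fun p : Fin m × Fin m => p.1 < p.2),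
        (a p.1 - a p.2) ^ 2 * MvPolynomial.eval a (P p.1 p.2) := by
      refine Finset.sum_nonneg (fun p hp => ?_)
      have hplt : p.1 < p.2 := (mem_filter.1 hp).2
      refine mul_nonneg (sq_nonneg _) ?_
      rw [heval a p hplt]
      refine Finset.sum_nonneg (fun l _ => ?_)
      refine mul_nonneg (mul_nonneg (hβ l) (pow_nonneg (Finset.sum_nonneg fun i _ => ha i) _)) ?_
      exact es_nonneg ha _ _
    linarith
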